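/- Under the same Kou-model setup with η₁ > 1, the truncated LETF jump multiplier satisfies E[ξ^ℓ] = p·η₁/(η₁−1) + (1−p)·η₂·[ϑ^{η₂+1}/η₂ + (1 − ϑ^{η₂+1})/(η₂+1)], where ϑ = (β−1)/β. -/

import Mathlib

open MeasureTheory

/-- Under the Kou jump density with `η₁ > 1`, the truncated LETF
jump multiplier `ξ^ℓ` (truncation of `ξ^s` at `ϑ = (β−1)/β`) satisfies
`E[ξ^ℓ] = p η₁/(η₁−1) + (1−p) η₂ (ϑ^{η₂+1}/η₂ + (1−ϑ^{η₂+1})/(η₂+1))`. -/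
theorem kou_expectation_xi_l (β p η₁ η₂ : ℝ) (hβ : 1 < β)
    (hp0 : 0 ≤ p) (hp1 : p ≤ 1) (hη₁ : 1 < η₁) (hη₂ : 0 < η₂) :
    let ϑ : ℝ := (β - 1) / β
    let G : ℝ → ℝ := fun x =>
      if 1 ≤ x then p * η₁ * x ^ (-η₁ - 1) else (1 - p) * η₂ * x ^ (η₂ - 1)
    let ξl : ℝ → ℝ := fun x => if ϑ < x then x else ϑ
    ∫ x in Set.Ioi (0 : ℝ), ξl x * G x =
      p * η₁ / (η₁ - 1) +
        (1 - p) * η₂ *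
          (ϑ ^ (η₂ + 1) / η₂ + (1 - ϑ ^ (η₂ + 1)) / (η₂ + 1)) := by
  intro ϑ G ξl
  have hβ0 : (0:ℝ) < β := lt_trans one_pos hβ
  have hϑ0 : 0 < ϑ := div_pos (by linarith) hβ0
  have hϑ1 : ϑ < 1 := (div_lt_one hβ0).mpr (by linarith)
  have hη₂' : (-1:ℝ) < η₂ - 1 := by linarith
  -- simplified integrands on the pieces
  have hfA : ∀ x ∈ Set.Ioc (0:ℝ) ϑ,
      ξl x * G x = (ϑ * ((1 - p) * η₂)) * x ^ (η₂ - 1) := by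
    intro x hx
    have h1 : ¬ ϑ < x := not_lt.mpr hx.2
    have h2 : ¬ (1:ℝ) ≤ x := not_le.mpr (lt_of_le_of_lt hx.2 hϑ1)
    simp only [ξl, G, if_neg h1, if_neg h2]; ring
  have hfB : ∀ x ∈ Set.Ioo ϑ (1:ℝ),
      ξl x * G x = ((1 - p) * η₂) * x ^ η₂ := by
    intro x hx
    have hx0 : (0:ℝ) < x := lt_trans hϑ0 hx.1
    have h1 : ϑ < x := hx.1
    have h2 : ¬ (1:ℝ) ≤ x := not_le.mpr hx.2
    simp only [ξl, G, if_pos h1, if_neg h2]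
    rw [show η₂ = (η₂ - 1) + 1 by ring, Real.rpow_add_one (ne_of_gt hx0)]
    ring
  have hfC : ∀ x ∈ Set.Ici (1:ℝ),
      ξl x * G x = (p * η₁) * x ^ (-η₁) := by
    intro x hx
    have hx0 : (0:ℝ) < x := lt_of_lt_of_le one_pos hx
    have h1 : ϑ < x := lt_of_lt_of_le hϑ1 hx
    have h2 : (1:ℝ) ≤ x := hx
    simp only [ξl, G, if_pos h1, if_pos h2]
    rw [show (-η₁ : ℝ) = (-η₁ - 1) + 1 by ring, Real.rpow_add_one (ne_of_gt hx0)]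
    ring
  -- integrability on each piece
  have hIA : IntegrableOn (fun x => ξl x * G x) (Set.Ioc 0 ϑ) := by
    refine (IntegrableOn.congr_fun ?_ (fun x hx => (hfA x hx).symm) measurableSet_Ioc)
    exact ((intervalIntegrable_iff_integrableOn_Ioc_of_le hϑ0.le).mp
      (intervalIntegral.intervalIntegrable_rpow' hη₂')).const_mul _
  have hIB : IntegrableOn (fun x => ξl x * G x) (Set.Ioo ϑ 1) := by
    refine (IntegrableOn.congr_fun ?_ (fun x hx => (hfB x hx).symm) measurableSet_Ioo)
    have : IntegrableOn (fun x : ℝ => x ^ η₂) (Set.Ioc ϑ 1) :=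
      (intervalIntegrable_iff_integrableOn_Ioc_of_le hϑ1.le).mp
        (intervalIntegral.intervalIntegrable_rpow' (by linarith))
    exact (this.mono_set Set.Ioo_subset_Ioc_self).const_mul _
  have hIC : IntegrableOn (fun x => ξl x * G x) (Set.Ici 1) := by
    refine (IntegrableOn.congr_fun ?_ (fun x hx => (hfC x hx).symm) measurableSet_Ici)
    exact (Iff.mpr integrableOn_Ici_iff_integrableOn_Ioi
      (integrableOn_Ioi_rpow_of_lt (by linarith) one_pos)).const_mul _
  -- split the domain
  have hsplit1 : Set.Ioc (0:ℝ) ϑ ∪ Set.Ioo ϑ 1 = Set.Ioo 0 1 :=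
    Set.Ioc_union_Ioo_eq_Ioo hϑ0.le hϑ1
  have hsplit2 : Set.Ioo (0:ℝ) 1 ∪ Set.Ici 1 = Set.Ioi 0 :=
    Set.Ioo_union_Ici_eq_Ioi one_pos
  have hd1 : Disjoint (Set.Ioc (0:ℝ) ϑ) (Set.Ioo ϑ 1) := by
    rw [Set.disjoint_left]; intro x hx hx'; exact absurd hx'.1 (not_lt.mpr hx.2)
  have hd2 : Disjoint (Set.Ioo (0:ℝ) 1) (Set.Ici 1) := by
    rw [Set.disjoint_left]; intro x hx hx'; exact absurd hx' (not_le.mpr hx.2)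
  have key : ∫ x in Set.Ioi (0:ℝ), ξl x * G x =
      (∫ x in Set.Ioc 0 ϑ, ξl x * G x) + (∫ x in Set.Ioo ϑ 1, ξl x * G x)
        + (∫ x in Set.Ici 1, ξl x * G x) := by
    rw [← hsplit2, setIntegral_union hd2 measurableSet_Ici
        (by rw [← hsplit1]; exact hIA.union hIB) hIC, ← hsplit1,
      setIntegral_union hd1 measurableSet_Ioo hIA hIB]
  -- compute each piece
  have hA : ∫ x in Set.Ioc (0:ℝ) ϑ, ξl x * G x
      = (1 - p) * η₂ * (ϑ ^ (η₂ + 1) / η₂) := by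
    rw [setIntegral_congr_fun measurableSet_Ioc hfA,
      ← intervalIntegral.integral_of_le hϑ0.le, intervalIntegral.integral_const_mul,
      integral_rpow (Or.inl hη₂')]
    rw [show η₂ - 1 + 1 = η₂ by ring, Real.zero_rpow (ne_of_gt hη₂)]
    rw [show η₂ + 1 = η₂ + 1 by ring, Real.rpow_add hϑ0, Real.rpow_one]
    field_simp
    ring
  have hB : ∫ x in Set.Ioo ϑ (1:ℝ), ξl x * G x
      = (1 - p) * η₂ * ((1 - ϑ ^ (η₂ + 1)) / (η₂ + 1)) := by
    rw [setIntegral_congr_fun measurableSet_Ioo hfB,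
      ← integral_Ioc_eq_integral_Ioo,
      ← intervalIntegral.integral_of_le hϑ1.le, intervalIntegral.integral_const_mul,
      integral_rpow (Or.inl (by linarith))]
    rw [Real.one_rpow]
  have hC : ∫ x in Set.Ici (1:ℝ), ξl x * G x = p * η₁ / (η₁ - 1) := by
    rw [setIntegral_congr_fun measurableSet_Ici hfC, integral_Ici_eq_integral_Ioi,
      integral_const_mul, integral_Ioi_rpow_of_lt (by linarith) one_pos,
      Real.one_rpow]
    rw [show -η₁ + 1 = -(η₁ - 1) by ring, div_neg, neg_div, neg_neg]
    ring
  rw [key, hA, hB, hC]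
  ring
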